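/- Let S be a Cu-semigroup satisfying O5, O6 and O7, and let λ ∈ F(S). Suppose that for all x, y ∈ S with λ(x) < ∞ and λ(y) < ∞ one has (x̂ ∧ ŷ)(λ) ≤ sup { λ(z) : z ≤ x, y }. Then S satisfies Edwards' condition for λ, i.e., inf { λ₁(x) + λ₂(y) : λ = λ₁ + λ₂ } = sup { λ(z) : z ≤ x, y } for all x, y ∈ S. -/

import Mathlib

open scoped ENNReal

namespace CuFormal

variable {S : Type*} [AddCommMonoid S] [PartialOrder S]

/-- The algebra-free way-below relation: `x ≪ y` iff whenever `y ≤ sup yₙ` for an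
increasing sequence with supremum, then `x ≤ yₙ` for some `n`. -/
def WayBelow (x y : S) : Prop :=
  ∀ f : ℕ → S, Monotone f → ∀ s : S, IsLUB (Set.range f) s → y ≤ s → ∃ n, x ≤ f n

/-- Positively ordered monoid with addition monotone. -/
def PosOrdered : Prop :=
  (∀ x : S, (0 : S) ≤ x) ∧ ∀ a b c : S, b ≤ c → a + b ≤ a + c

/-- O1: every increasing sequence has a supremum. -/
def AxO1 : Prop := ∀ f : ℕ → S, Monotone f → ∃ s : S, IsLUB (Set.range f) s

/-- O2: every element is the supremum of a ≪-increasing sequence. -/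
def AxO2 : Prop := ∀ x : S, ∃ f : ℕ → S, Monotone f ∧
  (∀ n, WayBelow (f n) (f (n + 1))) ∧ IsLUB (Set.range f) x

/-- O3 -/
def AxO3 : Prop := ∀ x₁ y₁ x₂ y₂ : S,
  WayBelow x₁ y₁ → WayBelow x₂ y₂ → WayBelow (x₁ + x₂) (y₁ + y₂)

/-- O4 -/
def AxO4 : Prop := ∀ f g : ℕ → S, Monotone f → Monotone g →
  ∀ a b : S, IsLUB (Set.range f) a → IsLUB (Set.range g) b →
    IsLUB (Set.range fun n => f n + g n) (a + b)

/-- A Cu-semigroup: positively ordered monoid satisfying O1–O4. -/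
def CuSemigroup : Prop :=
  PosOrdered (S := S) ∧ AxO1 (S := S) ∧ AxO2 (S := S) ∧ AxO3 (S := S) ∧ AxO4 (S := S)

/-- O5 -/
def AxO5 : Prop := ∀ x' x y w' w : S, WayBelow x' x → x ≤ y → WayBelow w' w →
  x + w ≤ y → ∃ z : S, x' + z ≤ y ∧ y ≤ x + z ∧ WayBelow w' z

/-- O6 -/
def AxO6 : Prop := ∀ x' x y z : S, WayBelow x' x → x ≤ y + z →
  ∃ y' z' : S, x' ≤ y' + z' ∧ y' ≤ x ∧ y' ≤ y ∧ z' ≤ x ∧ z' ≤ z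

/-- O7 -/
def AxO7 : Prop := ∀ x₁' x₁ x₂' x₂ w : S,
  WayBelow x₁' x₁ → x₁ ≤ w → WayBelow x₂' x₂ → x₂ ≤ w →
  ∃ x : S, WayBelow x₁' x ∧ WayBelow x₂' x ∧ x ≤ w ∧ x ≤ x₁ + x₂

/-- An ideal: a downward hereditary subsemigroup closed under suprema of increasing
sequences. -/
def IsIdeal (J : Set S) : Prop :=
  (0 : S) ∈ J ∧ (∀ x y : S, x ∈ J → y ∈ J → x + y ∈ J) ∧
  (∀ x y : S, y ∈ J → x ≤ y → x ∈ J) ∧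
  (∀ f : ℕ → S, Monotone f → (∀ n, f n ∈ J) →
    ∀ s : S, IsLUB (Set.range f) s → s ∈ J)

/-- Countably based. -/
def CountablyBased : Prop := ∃ B : Set S, B.Countable ∧
  ∀ x : S, ∃ f : ℕ → S, (∀ n, f n ∈ B) ∧ Monotone f ∧
    (∀ n, WayBelow (f n) (f (n + 1))) ∧ IsLUB (Set.range f) x

/-- A functional on `S`: preserves `0`, addition, order and suprema of increasing
sequences. -/
def IsFunctional (l : S → ℝ≥0∞) : Prop :=
  l 0 = 0 ∧ (∀ x y : S, l (x + y) = l x + l y) ∧ Monotone l ∧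
  (∀ f : ℕ → S, Monotone f → ∀ s : S, IsLUB (Set.range f) s → l s = ⨆ n, l (f n))

/-- `(x̂ ∧ ŷ)(λ) = inf { λ₁(x) + λ₂(y) : λ = λ₁ + λ₂ }`. -/
noncomputable def hatInf (x y : S) (l : S → ℝ≥0∞) : ℝ≥0∞ :=
  sInf {t : ℝ≥0∞ | ∃ l₁ l₂ : S → ℝ≥0∞, IsFunctional l₁ ∧ IsFunctional l₂ ∧
    (∀ u : S, l u = l₁ u + l₂ u) ∧ t = l₁ x + l₂ y}

/-- Edwards' condition for the functional `l`. -/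
def EdwardsFor (l : S → ℝ≥0∞) : Prop := ∀ x y : S,
  hatInf x y l = sSup {t : ℝ≥0∞ | ∃ z : S, z ≤ x ∧ z ≤ y ∧ t = l z}

/-- The ideal generated by a subset. -/
def idealGen (X : Set S) : Set S := ⋂₀ {J : Set S | IsIdeal J ∧ X ⊆ J}


section Statement18Helpers

open Filter Topology

variable {S : Type*} [AddCommMonoid S] [PartialOrder S]

lemma le_wb_le {a b c d : S} (hab : a ≤ b) (h : WayBelow b c) (hcd : c ≤ d) :
    WayBelow a d := by
  intro f hf s hs hle
  obtain ⟨n, hn⟩ := h f hf s hs (hcd.trans hle)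
  exact ⟨n, hab.trans hn⟩

lemma wb_le {a b : S} (h : WayBelow a b) : a ≤ b := by
  obtain ⟨n, hn⟩ := h (fun _ => b) monotone_const b
    ⟨by rintro z ⟨n, rfl⟩; exact le_rfl, fun z hz => hz ⟨0, rfl⟩⟩ le_rfl
  exact hn

lemma zero_wb (hP : PosOrdered (S := S)) (s : S) : WayBelow 0 s :=
  fun f _ _ _ _ => ⟨0, hP.1 _⟩

lemma add_le_add'' (hP : PosOrdered (S := S)) {a b c d : S} (h1 : a ≤ b) (h2 : c ≤ d) :
    a + c ≤ b + d := by
  refine (hP.2 a c d h2).trans ?_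
  rw [add_comm a d, add_comm b d]
  exact hP.2 d a b h1

lemma lub_le_mem {f : ℕ → S} {s : S} (hs : IsLUB (Set.range f) s) (n : ℕ) : f n ≤ s :=
  hs.1 ⟨n, rfl⟩

lemma wb_interpolate (hO2 : AxO2 (S := S)) {a s : S} (h : WayBelow a s) :
    ∃ m, WayBelow a m ∧ WayBelow m s := by
  obtain ⟨f, hf, hfwb, hfl⟩ := hO2 s
  obtain ⟨n, hn⟩ := h f hf s hfl le_rfl
  exact ⟨f (n + 1), le_wb_le hn (hfwb n) le_rfl,
    le_wb_le le_rfl (hfwb (n + 1)) (lub_le_mem hfl (n + 2))⟩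

lemma wb_pair_bound (hO2 : AxO2 (S := S)) {a b s : S} (ha : WayBelow a s) (hb : WayBelow b s) :
    ∃ c, a ≤ c ∧ b ≤ c ∧ WayBelow c s := by
  obtain ⟨f, hf, hfwb, hfl⟩ := hO2 s
  obtain ⟨n, hn⟩ := ha f hf s hfl le_rfl
  obtain ⟨m, hm⟩ := hb f hf s hfl le_rfl
  exact ⟨f (max n m), hn.trans (hf (le_max_left n m)), hm.trans (hf (le_max_right n m)),
    le_wb_le le_rfl (hfwb (max n m)) (lub_le_mem hfl (max n m + 1))⟩

lemma refine_sum (hP : PosOrdered (S := S)) (hO2 : AxO2 (S := S)) (hO4 : AxO4 (S := S))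
    {w s t : S} (h : WayBelow w (s + t)) :
    ∃ s' t', WayBelow s' s ∧ WayBelow t' t ∧ w ≤ s' + t' := by
  obtain ⟨f, hf, hfwb, hfl⟩ := hO2 s
  obtain ⟨g, hg, hgwb, hgl⟩ := hO2 t
  have hmono : Monotone fun n => f n + g n := fun i j hij => add_le_add'' hP (hf hij) (hg hij)
  obtain ⟨n, hn⟩ := h _ hmono (s + t) (hO4 f g hf hg s t hfl hgl) le_rfl
  exact ⟨f n, g n, le_wb_le le_rfl (hfwb n) (lub_le_mem hfl (n + 1)),
    le_wb_le le_rfl (hgwb n) (lub_le_mem hgl (n + 1)), hn⟩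

lemma l_le_of_wb_le (hO2 : AxO2 (S := S)) {l : S → ℝ≥0∞} (hl : IsFunctional l) {s : S}
    {C : ℝ≥0∞} (h : ∀ t, WayBelow t s → l t ≤ C) : l s ≤ C := by
  obtain ⟨f, hf, hfwb, hfl⟩ := hO2 s
  rw [hl.2.2.2 f hf s hfl]
  exact iSup_le fun n => h _ (le_wb_le le_rfl (hfwb n) (lub_le_mem hfl (n + 1)))

/-- The "finiteness ideal" of a functional. -/
def Jset (l : S → ℝ≥0∞) : Set S := {s | ∀ t : S, WayBelow t s → l t < ⊤}

lemma mem_Jset_of_lt {l : S → ℝ≥0∞} (hl : IsFunctional l) {s : S} (hs : l s < ⊤) :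
    s ∈ Jset l := fun t ht => lt_of_le_of_lt (hl.2.2.1 (wb_le ht)) hs

lemma Jset_hered {l : S → ℝ≥0∞} {s u : S} (hsu : s ≤ u) (hu : u ∈ Jset l) : s ∈ Jset l :=
  fun t ht => hu t (le_wb_le le_rfl ht hsu)

lemma Jset_zero {l : S → ℝ≥0∞} (hl : IsFunctional l) : (0 : S) ∈ Jset l :=
  mem_Jset_of_lt hl (by rw [hl.1]; exact lt_of_le_of_lt le_rfl ENNReal.zero_lt_top)

lemma Jset_add (hP : PosOrdered (S := S)) (hO2 : AxO2 (S := S)) (hO4 : AxO4 (S := S))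
    {l : S → ℝ≥0∞} (hl : IsFunctional l) {u v : S} (hu : u ∈ Jset l) (hv : v ∈ Jset l) :
    u + v ∈ Jset l := by
  intro t ht
  obtain ⟨u', v', hu', hv', htle⟩ := refine_sum hP hO2 hO4 ht
  calc l t ≤ l (u' + v') := hl.2.2.1 htle
  _ = l u' + l v' := hl.2.1 _ _
  _ < ⊤ := ENNReal.add_lt_top.2 ⟨hu _ hu', hv _ hv'⟩

lemma Jset_sup (hO2 : AxO2 (S := S)) {l : S → ℝ≥0∞} {f : ℕ → S} (hf : Monotone f)
    (hmem : ∀ n, f n ∈ Jset l) {s : S} (hs : IsLUB (Set.range f) s) : s ∈ Jset l := by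
  intro t ht
  obtain ⟨m, htm, hms⟩ := wb_interpolate hO2 ht
  obtain ⟨n, hn⟩ := hms f hf s hs le_rfl
  exact hmem n t (le_wb_le le_rfl htm hn)

end Statement18Helpers
section Statement18Helpers2

open Filter Topology

variable {S : Type*} [AddCommMonoid S] [PartialOrder S]

/-- The functional that is `0` on `K` and `∞` off `K`. -/
noncomputable def ziFun (K : Set S) : S → ℝ≥0∞ := fun s => ⨆ _ : s ∉ K, ⊤

lemma ziFun_of_mem {K : Set S} {s : S} (h : s ∈ K) : ziFun K s = 0 := by
  simp only [ziFun, iSup_neg (not_not_intro h)]; rfl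

lemma ziFun_of_not_mem {K : Set S} {s : S} (h : s ∉ K) : ziFun K s = ⊤ := by
  simp only [ziFun, iSup_pos h]

lemma isFunctional_ziFun (hP : PosOrdered (S := S)) {K : Set S} (h0 : (0 : S) ∈ K)
    (hadd : ∀ u v : S, u ∈ K → v ∈ K → u + v ∈ K)
    (hher : ∀ u v : S, u ≤ v → v ∈ K → u ∈ K)
    (hsup : ∀ f : ℕ → S, Monotone f → (∀ n, f n ∈ K) → ∀ s, IsLUB (Set.range f) s → s ∈ K) :
    IsFunctional (ziFun K) := by
  have hle_add_left : ∀ u v : S, u ≤ u + v := by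
    intro u v
    have := hP.2 u 0 v (hP.1 v)
    rwa [add_zero] at this
  refine ⟨ziFun_of_mem h0, ?_, ?_, ?_⟩
  · intro u v
    by_cases hu : u ∈ K
    · by_cases hv : v ∈ K
      · rw [ziFun_of_mem hu, ziFun_of_mem hv, ziFun_of_mem (hadd u v hu hv), add_zero]
      · have huv : u + v ∉ K := fun hm => hv (hher v (u + v) (by rw [add_comm]; exact hle_add_left v u) hm)
        rw [ziFun_of_not_mem huv, ziFun_of_not_mem hv, ziFun_of_mem hu, zero_add]
    · have huv : u + v ∉ K := fun hm => hu (hher u (u + v) (hle_add_left u v) hm)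
      rw [ziFun_of_not_mem huv, ziFun_of_not_mem hu, top_add]
  · intro u v huv
    by_cases hv : v ∈ K
    · rw [ziFun_of_mem (hher u v huv hv), ziFun_of_mem hv]
    · rw [ziFun_of_not_mem hv]; exact le_top
  · intro f hf s hs
    by_cases hall : ∀ n, f n ∈ K
    · rw [ziFun_of_mem (hsup f hf hall s hs)]
      refine (le_antisymm (iSup_le fun n => by rw [ziFun_of_mem (hall n)]) zero_le).symm
    · push_neg at hall
      obtain ⟨n₀, hn₀⟩ := hall
      have hsK : s ∉ K := fun hm => hn₀ (hher _ _ (lub_le_mem hs n₀) hm)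
      rw [ziFun_of_not_mem hsK]
      symm; apply top_unique
      calc (⊤ : ℝ≥0∞) = ziFun K (f n₀) := (ziFun_of_not_mem hn₀).symm
      _ ≤ _ := le_iSup (fun n => ziFun K (f n)) n₀

/-- Regularization of a premeasure along the way-below relation. -/
noncomputable def wbSup (g : S → ℝ≥0∞) (s : S) : ℝ≥0∞ := ⨆ t : {t : S // WayBelow t s}, g t.1

lemma le_wbSup {g : S → ℝ≥0∞} {t s : S} (h : WayBelow t s) : g t ≤ wbSup g s :=
  le_iSup (fun t : {t : S // WayBelow t s} => g t.1) ⟨t, h⟩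

lemma wbSup_le {g : S → ℝ≥0∞} {s : S} {C : ℝ≥0∞} (h : ∀ t, WayBelow t s → g t ≤ C) :
    wbSup g s ≤ C := iSup_le fun t => h t.1 t.2

lemma wbSup_add_le (hP : PosOrdered (S := S)) (hO3 : AxO3 (S := S)) {g : S → ℝ≥0∞}
    (hadd : ∀ u v : S, g (u + v) = g u + g v) (s t : S) :
    wbSup g s + wbSup g t ≤ wbSup g (s + t) := by
  haveI : Nonempty {t' : S // WayBelow t' s} := ⟨⟨0, zero_wb hP s⟩⟩
  haveI : Nonempty {t' : S // WayBelow t' t} := ⟨⟨0, zero_wb hP t⟩⟩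
  show (⨆ t₁ : {t' : S // WayBelow t' s}, g t₁.1) + (⨆ t₂ : {t' : S // WayBelow t' t}, g t₂.1)
      ≤ wbSup g (s + t)
  refine ENNReal.iSup_add_iSup_le fun t₁ t₂ => ?_
  rw [← hadd]
  exact le_wbSup (hO3 _ _ _ _ t₁.2 t₂.2)

lemma wbSup_eq (hO2 : AxO2 (S := S)) {l : S → ℝ≥0∞} (hl : IsFunctional l) (s : S) :
    wbSup l s = l s := by
  refine le_antisymm (wbSup_le fun t ht => hl.2.2.1 (wb_le ht)) ?_
  obtain ⟨f, hf, hfwb, hfl⟩ := hO2 s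
  rw [hl.2.2.2 f hf s hfl]
  exact iSup_le fun n => le_wbSup (le_wb_le le_rfl (hfwb n) (lub_le_mem hfl (n + 1)))

/-- Restriction-regularization of a premeasure to the finiteness ideal. -/
noncomputable def JSup (l g : S → ℝ≥0∞) (s : S) : ℝ≥0∞ :=
  ⨆ z : {z : S // z ≤ s ∧ z ∈ Jset l}, wbSup g z.1

lemma le_JSup {l g : S → ℝ≥0∞} {z s : S} (h1 : z ≤ s) (h2 : z ∈ Jset l) :
    wbSup g z ≤ JSup l g s :=
  le_iSup (fun z : {z : S // z ≤ s ∧ z ∈ Jset l} => wbSup g z.1) ⟨z, h1, h2⟩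

lemma JSup_le {l g : S → ℝ≥0∞} {s : S} {C : ℝ≥0∞}
    (h : ∀ z, z ≤ s → z ∈ Jset l → wbSup g z ≤ C) : JSup l g s ≤ C :=
  iSup_le fun z => h z.1 z.2.1 z.2.2

lemma JSup_mono {l g : S → ℝ≥0∞} {s u : S} (hsu : s ≤ u) : JSup l g s ≤ JSup l g u :=
  JSup_le fun z hz hzJ => le_JSup (hz.trans hsu) hzJ

lemma JSup_zero {l g : S → ℝ≥0∞} (hg0 : g 0 = 0) (hmono : ∀ u v : S, u ≤ v → g u ≤ g v) :
    JSup l g 0 = 0 := by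
  refine le_antisymm (JSup_le fun z hz _ => wbSup_le fun t ht => ?_) zero_le
  exact le_of_le_of_eq (hmono t 0 ((wb_le ht).trans hz)) hg0

lemma JSup_add (hP : PosOrdered (S := S)) (hO2 : AxO2 (S := S)) (hO3 : AxO3 (S := S))
    (hO4 : AxO4 (S := S)) (hO6 : AxO6 (S := S)) {l g : S → ℝ≥0∞} (hl : IsFunctional l)
    (hmono : ∀ u v : S, u ≤ v → g u ≤ g v) (hadd : ∀ u v : S, g (u + v) = g u + g v)
    (s t : S) : JSup l g (s + t) = JSup l g s + JSup l g t := by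
  refine le_antisymm ?_ ?_
  · refine JSup_le fun z hz hzJ => wbSup_le fun w hw => ?_
    obtain ⟨w₂, hww₂, hw₂z⟩ := wb_interpolate hO2 hw
    obtain ⟨w₁, hw₂w₁, hw₁z⟩ := wb_interpolate hO2 hw₂z
    obtain ⟨s₁, t₁, hs₁, ht₁, hw₁le⟩ := refine_sum hP hO2 hO4 (le_wb_le le_rfl hw₁z hz)
    obtain ⟨a, b, hw₂ab, haw₁, has₁, hbw₁, hbt₁⟩ := hO6 w₂ w₁ s₁ t₁ hw₂w₁ hw₁le
    obtain ⟨a', b', ha', hb', hwle⟩ := refine_sum hP hO2 hO4 (le_wb_le le_rfl hww₂ hw₂ab)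
    have haJ : a ∈ Jset l := Jset_hered (haw₁.trans (wb_le hw₁z)) hzJ
    have hbJ : b ∈ Jset l := Jset_hered (hbw₁.trans (wb_le hw₁z)) hzJ
    calc g w ≤ g (a' + b') := hmono _ _ hwle
    _ = g a' + g b' := hadd _ _
    _ ≤ wbSup g a + wbSup g b := add_le_add (le_wbSup ha') (le_wbSup hb')
    _ ≤ _ := add_le_add (le_JSup (has₁.trans (wb_le hs₁)) haJ)
        (le_JSup (hbt₁.trans (wb_le ht₁)) hbJ)
  · haveI : Nonempty {z : S // z ≤ s ∧ z ∈ Jset l} := ⟨⟨0, hP.1 s, Jset_zero hl⟩⟩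
    haveI : Nonempty {z : S // z ≤ t ∧ z ∈ Jset l} := ⟨⟨0, hP.1 t, Jset_zero hl⟩⟩
    show (⨆ z₁ : {z : S // z ≤ s ∧ z ∈ Jset l}, wbSup g z₁.1)
        + (⨆ z₂ : {z : S // z ≤ t ∧ z ∈ Jset l}, wbSup g z₂.1) ≤ JSup l g (s + t)
    refine ENNReal.iSup_add_iSup_le fun z₁ z₂ => ?_
    refine (wbSup_add_le hP hO3 hadd z₁.1 z₂.1).trans ?_
    exact le_JSup (add_le_add'' hP z₁.2.1 z₂.2.1) (Jset_add hP hO2 hO4 hl z₁.2.2 z₂.2.2)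

lemma JSup_supCont (hO2 : AxO2 (S := S)) {l g : S → ℝ≥0∞} {f : ℕ → S} (hf : Monotone f)
    {s : S} (hs : IsLUB (Set.range f) s) : JSup l g s = ⨆ n, JSup l g (f n) := by
  refine le_antisymm ?_ (iSup_le fun n => JSup_mono (lub_le_mem hs n))
  refine JSup_le fun z hz hzJ => wbSup_le fun w hw => ?_
  obtain ⟨m, hwm, hmz⟩ := wb_interpolate hO2 hw
  obtain ⟨n, hn⟩ := (le_wb_le le_rfl hmz hz) f hf s hs le_rfl
  exact le_trans (le_trans (le_wbSup hwm) (le_JSup hn (Jset_hered (wb_le hmz) hzJ)))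
    (le_iSup (fun n => JSup l g (f n)) n)

lemma isFunctional_JSup (hP : PosOrdered (S := S)) (hO2 : AxO2 (S := S)) (hO3 : AxO3 (S := S))
    (hO4 : AxO4 (S := S)) (hO6 : AxO6 (S := S)) {l g : S → ℝ≥0∞} (hl : IsFunctional l)
    (hg0 : g 0 = 0) (hmono : ∀ u v : S, u ≤ v → g u ≤ g v)
    (hadd : ∀ u v : S, g (u + v) = g u + g v) : IsFunctional (JSup l g) :=
  ⟨JSup_zero hg0 hmono, fun u v => JSup_add hP hO2 hO3 hO4 hO6 hl hmono hadd u v,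
    fun _ _ huv => JSup_mono huv, fun f hf s hs => JSup_supCont hO2 hf hs⟩

lemma JSup_pair (hP : PosOrdered (S := S)) (hO2 : AxO2 (S := S)) (hO4 : AxO4 (S := S))
    (hO7 : AxO7 (S := S)) {l g₁ g₂ : S → ℝ≥0∞} (hl : IsFunctional l)
    (hm₁ : ∀ u v : S, u ≤ v → g₁ u ≤ g₁ v) (hm₂ : ∀ u v : S, u ≤ v → g₂ u ≤ g₂ v)
    (hsum : ∀ u : S, g₁ u + g₂ u = l u) (s : S) :
    JSup l g₁ s + JSup l g₂ s = JSup l l s := by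
  refine le_antisymm ?_ ?_
  · haveI : Nonempty {z : S // z ≤ s ∧ z ∈ Jset l} := ⟨⟨0, hP.1 s, Jset_zero hl⟩⟩
    show (⨆ z₁ : {z : S // z ≤ s ∧ z ∈ Jset l}, wbSup g₁ z₁.1)
        + (⨆ z₂ : {z : S // z ≤ s ∧ z ∈ Jset l}, wbSup g₂ z₂.1) ≤ JSup l l s
    refine ENNReal.iSup_add_iSup_le fun z₁ z₂ => ?_
    haveI : Nonempty {t : S // WayBelow t z₁.1} := ⟨⟨0, zero_wb hP _⟩⟩
    haveI : Nonempty {t : S // WayBelow t z₂.1} := ⟨⟨0, zero_wb hP _⟩⟩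
    show (⨆ t₁ : {t : S // WayBelow t z₁.1}, g₁ t₁.1)
        + (⨆ t₂ : {t : S // WayBelow t z₂.1}, g₂ t₂.1) ≤ JSup l l s
    refine ENNReal.iSup_add_iSup_le fun t₁ t₂ => ?_
    obtain ⟨u, ht₁u, ht₂u, hus, huz⟩ := hO7 t₁.1 z₁.1 t₂.1 z₂.1 s t₁.2 z₁.2.1 t₂.2 z₂.2.1
    have huJ : u ∈ Jset l := Jset_hered huz (Jset_add hP hO2 hO4 hl z₁.2.2 z₂.2.2)
    calc g₁ t₁.1 + g₂ t₂.1 ≤ g₁ u + g₂ u :=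
        add_le_add (hm₁ _ _ (wb_le ht₁u)) (hm₂ _ _ (wb_le ht₂u))
    _ = l u := hsum u
    _ = wbSup l u := (wbSup_eq hO2 hl u).symm
    _ ≤ _ := le_JSup hus huJ
  · refine JSup_le fun z hz hzJ => wbSup_le fun t ht => ?_
    calc l t = g₁ t + g₂ t := (hsum t).symm
    _ ≤ wbSup g₁ z + wbSup g₂ z := add_le_add (le_wbSup ht) (le_wbSup ht)
    _ ≤ _ := add_le_add (le_JSup hz hzJ) (le_JSup hz hzJ)

lemma JSup_self_add_zi (hO2 : AxO2 (S := S)) {l : S → ℝ≥0∞} (hl : IsFunctional l) (s : S) :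
    JSup l l s + ziFun (Jset l) s = l s := by
  by_cases hs : s ∈ Jset l
  · rw [ziFun_of_mem hs, add_zero]
    refine le_antisymm (JSup_le fun z hz _ => wbSup_le fun t ht => hl.2.2.1 ((wb_le ht).trans hz)) ?_
    calc l s = wbSup l s := (wbSup_eq hO2 hl s).symm
    _ ≤ _ := le_JSup le_rfl hs
  · rw [ziFun_of_not_mem hs]
    have hls : l s = ⊤ := by
      simp only [Jset, Set.mem_setOf_eq, not_forall, not_lt, top_le_iff] at hs
      obtain ⟨t, ht, htop⟩ := hs
      exact top_unique (htop ▸ hl.2.2.1 (wb_le ht))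
    rw [add_top, hls]

end Statement18Helpers2
section Statement18Helpers3

open Filter Topology

variable {S : Type*} [AddCommMonoid S] [PartialOrder S]

/-- The ideal generated by `x` together with the finiteness ideal. -/
def Kset (l : S → ℝ≥0∞) (x : S) : Set S :=
  {s | ∀ t : S, WayBelow t s → ∃ (n : ℕ) (v : S), v ∈ Jset l ∧ t ≤ n • x + v}

lemma self_mem_Kset {l : S → ℝ≥0∞} (hl : IsFunctional l) (x : S) : x ∈ Kset l x :=
  fun t ht => ⟨1, 0, Jset_zero hl, by rw [one_nsmul, add_zero]; exact wb_le ht⟩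

lemma Jset_sub_Kset {l : S → ℝ≥0∞} (x : S) {s : S} (hs : s ∈ Jset l) : s ∈ Kset l x :=
  fun t ht => ⟨0, s, hs, by rw [zero_nsmul, zero_add]; exact wb_le ht⟩

lemma Kset_zero {l : S → ℝ≥0∞} (hl : IsFunctional l) (x : S) : (0 : S) ∈ Kset l x :=
  Jset_sub_Kset x (Jset_zero hl)

lemma Kset_hered {l : S → ℝ≥0∞} {x s u : S} (hsu : s ≤ u) (hu : u ∈ Kset l x) :
    s ∈ Kset l x := fun t ht => hu t (le_wb_le le_rfl ht hsu)

lemma Kset_add (hP : PosOrdered (S := S)) (hO2 : AxO2 (S := S)) (hO4 : AxO4 (S := S))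
    {l : S → ℝ≥0∞} (hl : IsFunctional l) {x u v : S} (hu : u ∈ Kset l x) (hv : v ∈ Kset l x) :
    u + v ∈ Kset l x := by
  intro t ht
  obtain ⟨u', v', hu', hv', hle⟩ := refine_sum hP hO2 hO4 ht
  obtain ⟨n, a, haJ, hua⟩ := hu u' hu'
  obtain ⟨m, b, hbJ, hvb⟩ := hv v' hv'
  refine ⟨n + m, a + b, Jset_add hP hO2 hO4 hl haJ hbJ, ?_⟩
  calc t ≤ u' + v' := hle
  _ ≤ (n • x + a) + (m • x + b) := add_le_add'' hP hua hvb
  _ = (n + m) • x + (a + b) := by rw [add_add_add_comm, ← add_nsmul]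

lemma Kset_sup (hO2 : AxO2 (S := S)) {l : S → ℝ≥0∞} {x : S} {f : ℕ → S} (hf : Monotone f)
    (hmem : ∀ n, f n ∈ Kset l x) {s : S} (hs : IsLUB (Set.range f) s) : s ∈ Kset l x := by
  intro t ht
  obtain ⟨m, htm, hms⟩ := wb_interpolate hO2 ht
  obtain ⟨n, hn⟩ := hms f hf s hs le_rfl
  exact hmem n t (le_wb_le le_rfl htm hn)

lemma riesz_one (hO2 : AxO2 (S := S)) (hO6 : AxO6 (S := S)) {l : S → ℝ≥0∞}
    (hl : IsFunctional l) {x y : S} {α : ℝ≥0∞} (hα : ∀ z : S, z ≤ x → z ≤ y → l z ≤ α) :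
    ∀ (m : ℕ) (u : S), u ≤ x → u ≤ m • y → l u ≤ (m : ℝ≥0∞) * α := by
  intro m
  induction m with
  | zero =>
    intro u _ huy
    rw [zero_nsmul] at huy
    have h0 : l u ≤ l 0 := hl.2.2.1 huy
    rw [hl.1] at h0
    simpa using h0
  | succ m ih =>
    intro u hux huy
    refine l_le_of_wb_le hO2 hl fun t ht => ?_
    have huy' : u ≤ y + m • y := by rw [succ_nsmul, add_comm] at huy; exact huy
    obtain ⟨p, q, htpq, hpu, hpy, hqu, hqmy⟩ := hO6 t u y (m • y) ht huy'
    calc l t ≤ l (p + q) := hl.2.2.1 htpq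
    _ = l p + l q := hl.2.1 _ _
    _ ≤ α + (m : ℝ≥0∞) * α := add_le_add (hα p (hpu.trans hux) hpy) (ih q (hqu.trans hux) hqmy)
    _ = ((m + 1 : ℕ) : ℝ≥0∞) * α := by push_cast; ring

lemma riesz_two (hO2 : AxO2 (S := S)) (hO6 : AxO6 (S := S)) {l : S → ℝ≥0∞}
    (hl : IsFunctional l) {x y : S} {α : ℝ≥0∞} (hα : ∀ z : S, z ≤ x → z ≤ y → l z ≤ α) :
    ∀ (n m : ℕ) (z : S), z ≤ n • x → z ≤ m • y → l z ≤ ((n * m : ℕ) : ℝ≥0∞) * α := by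
  intro n
  induction n with
  | zero =>
    intro m u hux _
    rw [zero_nsmul] at hux
    have h0 : l u ≤ l 0 := hl.2.2.1 hux
    rw [hl.1] at h0
    simpa using h0
  | succ n ih =>
    intro m z hzx hzy
    refine l_le_of_wb_le hO2 hl fun t ht => ?_
    have hzx' : z ≤ x + n • x := by rw [succ_nsmul, add_comm] at hzx; exact hzx
    obtain ⟨p, q, htpq, hpz, hpx, hqz, hqnx⟩ := hO6 t z x (n • x) ht hzx'
    calc l t ≤ l (p + q) := hl.2.2.1 htpq
    _ = l p + l q := hl.2.1 _ _
    _ ≤ (m : ℝ≥0∞) * α + ((n * m : ℕ) : ℝ≥0∞) * α :=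
        add_le_add (riesz_one hO2 hO6 hl hα m p hpx (hpz.trans hzy)) (ih m q hqnx (hqz.trans hzy))
    _ = (((n + 1) * m : ℕ) : ℝ≥0∞) * α := by push_cast; ring

lemma Kset_inter_sub_Jset (hP : PosOrdered (S := S)) (hO2 : AxO2 (S := S))
    (hO4 : AxO4 (S := S)) (hO6 : AxO6 (S := S)) {l : S → ℝ≥0∞} (hl : IsFunctional l)
    {x y : S} {α : ℝ≥0∞} (hα : ∀ z : S, z ≤ x → z ≤ y → l z ≤ α) (hαtop : α ≠ ⊤) {s : S}
    (hsx : s ∈ Kset l x) (hsy : s ∈ Kset l y) : s ∈ Jset l := by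
  intro t ht
  obtain ⟨σ, htσ, hσs⟩ := wb_interpolate hO2 ht
  obtain ⟨τ, hστ, hτs⟩ := wb_interpolate hO2 hσs
  obtain ⟨n, v, hvJ, hτx⟩ := hsx τ hτs
  obtain ⟨m, w, hwJ, hτy⟩ := hsy τ hτs
  obtain ⟨g, h₀, hg, hh₀, hσle⟩ := refine_sum hP hO2 hO4 (le_wb_le le_rfl hστ hτx)
  obtain ⟨g', h₀', hg', hh₀', hσle'⟩ := refine_sum hP hO2 hO4 (le_wb_le le_rfl hστ hτy)
  obtain ⟨g₁, h₁, ht₁, hg₁σ, hg₁g, hh₁σ, hh₁h₀⟩ := hO6 t σ g h₀ htσ hσle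
  have hfin_h₀ : l h₀ < ⊤ := hvJ h₀ hh₀
  have hfin_h₀' : l h₀' < ⊤ := hwJ h₀' hh₀'
  have hg₁bound : l g₁ ≤ ((n * m : ℕ) : ℝ≥0∞) * α + l h₀' := by
    refine l_le_of_wb_le hO2 hl fun r hr => ?_
    obtain ⟨g₂, h₂, hr₂, hg₂g₁, hg₂g', hh₂g₁, hh₂h₀'⟩ := hO6 r g₁ g' h₀' hr (hg₁σ.trans hσle')
    have hgb : l g₂ ≤ ((n * m : ℕ) : ℝ≥0∞) * α :=
      riesz_two hO2 hO6 hl hα n m g₂ ((hg₂g₁.trans hg₁g).trans (wb_le hg))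
        (hg₂g'.trans (wb_le hg'))
    calc l r ≤ l (g₂ + h₂) := hl.2.2.1 hr₂
    _ = l g₂ + l h₂ := hl.2.1 _ _
    _ ≤ _ := add_le_add hgb (hl.2.2.1 hh₂h₀')
  calc l t ≤ l (g₁ + h₁) := hl.2.2.1 ht₁
  _ = l g₁ + l h₁ := hl.2.1 _ _
  _ ≤ (((n * m : ℕ) : ℝ≥0∞) * α + l h₀') + l h₀ := add_le_add hg₁bound (hl.2.2.1 hh₁h₀)
  _ < ⊤ := by
    refine ENNReal.add_lt_top.2 ⟨ENNReal.add_lt_top.2 ⟨?_, hfin_h₀'⟩, hfin_h₀⟩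
    exact ENNReal.mul_lt_top (ENNReal.natCast_lt_top _) (lt_top_iff_ne_top.2 hαtop)

lemma isFunctional_add {f g : S → ℝ≥0∞} (hf : IsFunctional f) (hg : IsFunctional g) :
    IsFunctional fun u => f u + g u := by
  refine ⟨by simp only [hf.1, hg.1, add_zero], fun u v => by
      simp only [hf.2.1, hg.2.1]; exact add_add_add_comm _ _ _ _,
    fun u v huv => add_le_add (hf.2.2.1 huv) (hg.2.2.1 huv), ?_⟩
  intro q hq s hs
  show f s + g s = ⨆ n, f (q n) + g (q n)
  rw [hf.2.2.2 q hq s hs, hg.2.2.2 q hq s hs]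
  exact ENNReal.iSup_add_iSup fun i j =>
    ⟨max i j, add_le_add (hf.2.2.1 (hq (le_max_left i j))) (hg.2.2.1 (hq (le_max_right i j)))⟩

/-- Ultrafilter limit in `ℝ≥0∞`. -/
noncomputable def ulim {ι : Type*} (U : Ultrafilter ι) (g : ι → ℝ≥0∞) : ℝ≥0∞ :=
  (isCompact_univ.ultrafilter_le_nhds (Ultrafilter.map g U)
    (le_principal_iff.2 Filter.univ_mem)).choose

lemma ulim_tendsto {ι : Type*} (U : Ultrafilter ι) (g : ι → ℝ≥0∞) :
    Filter.Tendsto g ↑U (𝓝 (ulim U g)) := by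
  have h2 := (isCompact_univ.ultrafilter_le_nhds (Ultrafilter.map g U)
    (le_principal_iff.2 Filter.univ_mem)).choose_spec.2
  show Filter.map g ↑U ≤ 𝓝 (ulim U g)
  rw [← Ultrafilter.coe_map]
  exact h2

lemma ulim_eq {ι : Type*} {U : Ultrafilter ι} {g : ι → ℝ≥0∞} {a : ℝ≥0∞}
    (h : Filter.Tendsto g ↑U (𝓝 a)) : ulim U g = a :=
  tendsto_nhds_unique (ulim_tendsto U g) h

lemma ulim_const {ι : Type*} (U : Ultrafilter ι) (c : ℝ≥0∞) : ulim U (fun _ => c) = c :=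
  ulim_eq tendsto_const_nhds

lemma ulim_add {ι : Type*} (U : Ultrafilter ι) (f g : ι → ℝ≥0∞) :
    ulim U (fun i => f i + g i) = ulim U f + ulim U g :=
  ulim_eq ((ulim_tendsto U f).add (ulim_tendsto U g))

lemma ulim_le_ulim {ι : Type*} {U : Ultrafilter ι} {f g : ι → ℝ≥0∞}
    (h : ∀ᶠ i in ↑U, f i ≤ g i) : ulim U f ≤ ulim U g :=
  le_of_tendsto_of_tendsto (ulim_tendsto U f) (ulim_tendsto U g) h

lemma ulim_le_const {ι : Type*} {U : Ultrafilter ι} {f : ι → ℝ≥0∞} {c : ℝ≥0∞}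
    (h : ∀ᶠ i in ↑U, f i ≤ c) : ulim U f ≤ c := by
  have := ulim_le_ulim (U := U) (g := fun _ => c) h
  rwa [ulim_const] at this

end Statement18Helpers3

/-- to verify Edwards' condition for `λ`, it suffices to do so on pairs
of elements on which `λ` is finite. -/
theorem stmt18 {S : Type*} [AddCommMonoid S] [PartialOrder S]
    (hCu : CuSemigroup (S := S)) (hO5 : AxO5 (S := S)) (hO6 : AxO6 (S := S))
    (hO7 : AxO7 (S := S)) (l : S → ℝ≥0∞) (hl : IsFunctional l)
    (h : ∀ x y : S, l x < ∞ → l y < ∞ →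
      hatInf x y l ≤ sSup {t : ℝ≥0∞ | ∃ z : S, z ≤ x ∧ z ≤ y ∧ t = l z}) :
    EdwardsFor l := by
  classical
  obtain ⟨hP, hO1, hO2, hO3, hO4⟩ := hCu
  intro x y
  -- the easy inequality
  have hge : sSup {t : ℝ≥0∞ | ∃ z : S, z ≤ x ∧ z ≤ y ∧ t = l z} ≤ hatInf x y l := by
    apply le_sInf
    rintro r ⟨l₁, l₂, h₁, h₂, hsum, rfl⟩
    apply sSup_le
    rintro t ⟨z, hzx, hzy, rfl⟩
    calc l z = l₁ z + l₂ z := hsum z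
    _ ≤ l₁ x + l₂ y := add_le_add (h₁.2.2.1 hzx) (h₂.2.2.1 hzy)
  refine le_antisymm ?_ hge
  set α : ℝ≥0∞ := sSup {t : ℝ≥0∞ | ∃ z : S, z ≤ x ∧ z ≤ y ∧ t = l z} with hαdef
  have hα : ∀ z : S, z ≤ x → z ≤ y → l z ≤ α := fun z h1 h2 => le_sSup ⟨z, h1, h2, rfl⟩
  refine ENNReal.le_of_forall_pos_le_add fun ε hε hαtop => ?_
  -- index sets for approximations
  set Tx : Set S := {c | ∃ z : S, WayBelow c z ∧ z ≤ x ∧ z ∈ Jset l} with hTxdef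
  set Ty : Set S := {c | ∃ z : S, WayBelow c z ∧ z ≤ y ∧ z ∈ Jset l} with hTydef
  have hTxle : ∀ c ∈ Tx, c ≤ x ∧ l c < ⊤ := by
    rintro c ⟨z, hcz, hzx, hzJ⟩
    exact ⟨(wb_le hcz).trans hzx, hzJ c hcz⟩
  have hTyle : ∀ c ∈ Ty, c ≤ y ∧ l c < ⊤ := by
    rintro c ⟨z, hcz, hzy, hzJ⟩
    exact ⟨(wb_le hcz).trans hzy, hzJ c hcz⟩
  have hTx0 : (0 : S) ∈ Tx := ⟨0, zero_wb hP 0, hP.1 x, Jset_zero hl⟩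
  have hTy0 : (0 : S) ∈ Ty := ⟨0, zero_wb hP 0, hP.1 y, Jset_zero hl⟩
  have hTxdir : ∀ a ∈ Tx, ∀ b ∈ Tx, ∃ c ∈ Tx, a ≤ c ∧ b ≤ c := by
    rintro a ⟨z₁, haz₁, hz₁x, hz₁J⟩ b ⟨z₂, hbz₂, hz₂x, hz₂J⟩
    obtain ⟨u, hau, hbu, hux, huz⟩ := hO7 a z₁ b z₂ x haz₁ hz₁x hbz₂ hz₂x
    have huJ : u ∈ Jset l := Jset_hered huz (Jset_add hP hO2 hO4 hl hz₁J hz₂J)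
    obtain ⟨c, hac, hbc, hcu⟩ := wb_pair_bound hO2 hau hbu
    exact ⟨c, ⟨u, hcu, hux, huJ⟩, hac, hbc⟩
  have hTydir : ∀ a ∈ Ty, ∀ b ∈ Ty, ∃ c ∈ Ty, a ≤ c ∧ b ≤ c := by
    rintro a ⟨z₁, haz₁, hz₁y, hz₁J⟩ b ⟨z₂, hbz₂, hz₂y, hz₂J⟩
    obtain ⟨u, hau, hbu, huy, huz⟩ := hO7 a z₁ b z₂ y haz₁ hz₁y hbz₂ hz₂y
    have huJ : u ∈ Jset l := Jset_hered huz (Jset_add hP hO2 hO4 hl hz₁J hz₂J)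
    obtain ⟨c, hac, hbc, hcu⟩ := wb_pair_bound hO2 hau hbu
    exact ⟨c, ⟨u, hcu, huy, huJ⟩, hac, hbc⟩
  -- the directed index type and an ultrafilter on it
  haveI hLamNe : Nonempty {p : S × S // p.1 ∈ Tx ∧ p.2 ∈ Ty} := ⟨⟨(0, 0), hTx0, hTy0⟩⟩
  have hdir : ∀ i j : {p : S × S // p.1 ∈ Tx ∧ p.2 ∈ Ty},
      ∃ k : {p : S × S // p.1 ∈ Tx ∧ p.2 ∈ Ty}, i ≤ k ∧ j ≤ k := by
    rintro ⟨⟨a₁, a₂⟩, ha₁, ha₂⟩ ⟨⟨b₁, b₂⟩, hb₁, hb₂⟩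
    obtain ⟨c₁, hc₁T, hac₁, hbc₁⟩ := hTxdir a₁ ha₁ b₁ hb₁
    obtain ⟨c₂, hc₂T, hac₂, hbc₂⟩ := hTydir a₂ ha₂ b₂ hb₂
    exact ⟨⟨(c₁, c₂), hc₁T, hc₂T⟩, ⟨hac₁, hac₂⟩, ⟨hbc₁, hbc₂⟩⟩
  set F : Filter {p : S × S // p.1 ∈ Tx ∧ p.2 ∈ Ty} :=
    ⨅ i : {p : S × S // p.1 ∈ Tx ∧ p.2 ∈ Ty}, Filter.principal (Set.Ici i) with hFdef
  haveI hFne : F.NeBot := by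
    refine Filter.iInf_neBot_of_directed ?_ ?_
    · intro i j
      obtain ⟨k, hik, hjk⟩ := hdir i j
      exact ⟨k, Filter.principal_mono.2 (Set.Ici_subset_Ici.2 hik),
        Filter.principal_mono.2 (Set.Ici_subset_Ici.2 hjk)⟩
    · exact fun i => Filter.principal_neBot_iff.2 ⟨i, Set.mem_Ici.2 le_rfl⟩
  set U : Ultrafilter {p : S × S // p.1 ∈ Tx ∧ p.2 ∈ Ty} := Ultrafilter.of F with hUdef
  have hUic : ∀ i : {p : S × S // p.1 ∈ Tx ∧ p.2 ∈ Ty}, Set.Ici i ∈ U := fun i =>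
    Ultrafilter.of_le F (Filter.mem_iInf_of_mem i (Filter.mem_principal_self _))
  -- choose near-optimal decompositions at the finite pairs
  have hdec : ∀ i : {p : S × S // p.1 ∈ Tx ∧ p.2 ∈ Ty},
      ∃ p : (S → ℝ≥0∞) × (S → ℝ≥0∞), IsFunctional p.1 ∧ IsFunctional p.2 ∧
        (∀ u : S, l u = p.1 u + p.2 u) ∧ p.1 i.1.1 + p.2 i.1.2 ≤ α + ε := by
    intro i
    obtain ⟨hc1x, hc1fin⟩ := hTxle i.1.1 i.2.1
    obtain ⟨hc2y, hc2fin⟩ := hTyle i.1.2 i.2.2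
    have hble : sSup {t : ℝ≥0∞ | ∃ z : S, z ≤ i.1.1 ∧ z ≤ i.1.2 ∧ t = l z} ≤ α := by
      apply sSup_le
      rintro t ⟨z, h1, h2, rfl⟩
      exact hα z (h1.trans hc1x) (h2.trans hc2y)
    have hlt : hatInf i.1.1 i.1.2 l < α + ε :=
      ((h i.1.1 i.1.2 hc1fin hc2fin).trans hble).trans_lt
        (ENNReal.lt_add_right hαtop.ne (by exact_mod_cast hε.ne'))
    rw [hatInf] at hlt
    obtain ⟨t, ⟨l₁, l₂, h₁, h₂, hsum, rfl⟩, htlt⟩ := sInf_lt_iff.mp hlt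
    exact ⟨(l₁, l₂), h₁, h₂, hsum, htlt.le⟩
  choose ν hν₁ hν₂ hνsum hνle using hdec
  -- ultrafilter limits
  set μt₁ : S → ℝ≥0∞ := fun u => ulim U fun i => (ν i).1 u with hμt₁def
  set μt₂ : S → ℝ≥0∞ := fun u => ulim U fun i => (ν i).2 u with hμt₂def
  have hμt₁0 : μt₁ 0 = 0 := by
    rw [hμt₁def]
    have : (fun i : {p : S × S // p.1 ∈ Tx ∧ p.2 ∈ Ty} => (ν i).1 0) = fun _ => 0 :=
      funext fun i => (hν₁ i).1
    simp only [this]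
    exact ulim_const U 0
  have hμt₂0 : μt₂ 0 = 0 := by
    rw [hμt₂def]
    have : (fun i : {p : S × S // p.1 ∈ Tx ∧ p.2 ∈ Ty} => (ν i).2 0) = fun _ => 0 :=
      funext fun i => (hν₂ i).1
    simp only [this]
    exact ulim_const U 0
  have hμt₁add : ∀ u v : S, μt₁ (u + v) = μt₁ u + μt₁ v := by
    intro u v
    have : (fun i : {p : S × S // p.1 ∈ Tx ∧ p.2 ∈ Ty} => (ν i).1 (u + v))
        = fun i => (ν i).1 u + (ν i).1 v := funext fun i => (hν₁ i).2.1 u v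
    rw [hμt₁def]
    simp only [this]
    exact ulim_add U _ _
  have hμt₂add : ∀ u v : S, μt₂ (u + v) = μt₂ u + μt₂ v := by
    intro u v
    have : (fun i : {p : S × S // p.1 ∈ Tx ∧ p.2 ∈ Ty} => (ν i).2 (u + v))
        = fun i => (ν i).2 u + (ν i).2 v := funext fun i => (hν₂ i).2.1 u v
    rw [hμt₂def]
    simp only [this]
    exact ulim_add U _ _
  have hμt₁mono : ∀ u v : S, u ≤ v → μt₁ u ≤ μt₁ v := fun u v huv =>
    ulim_le_ulim (Filter.Eventually.of_forall fun i => (hν₁ i).2.2.1 huv)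
  have hμt₂mono : ∀ u v : S, u ≤ v → μt₂ u ≤ μt₂ v := fun u v huv =>
    ulim_le_ulim (Filter.Eventually.of_forall fun i => (hν₂ i).2.2.1 huv)
  have hμtsum : ∀ u : S, μt₁ u + μt₂ u = l u := by
    intro u
    rw [hμt₁def, hμt₂def]
    rw [← ulim_add U]
    have : (fun i : {p : S × S // p.1 ∈ Tx ∧ p.2 ∈ Ty} => (ν i).1 u + (ν i).2 u)
        = fun _ => l u := funext fun i => (hνsum i u).symm
    rw [this]
    exact ulim_const U _
  -- the two halves of the decomposition
  set μ₁ : S → ℝ≥0∞ := JSup l μt₁ with hμ₁def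
  set μ₂ : S → ℝ≥0∞ := JSup l μt₂ with hμ₂def
  have hμ₁F : IsFunctional μ₁ := isFunctional_JSup hP hO2 hO3 hO4 hO6 hl hμt₁0 hμt₁mono hμt₁add
  have hμ₂F : IsFunctional μ₂ := isFunctional_JSup hP hO2 hO3 hO4 hO6 hl hμt₂0 hμt₂mono hμt₂add
  have hzi₁F : IsFunctional (ziFun (Kset l x)) :=
    isFunctional_ziFun hP (Kset_zero hl x) (fun u v hu hv => Kset_add hP hO2 hO4 hl hu hv)
      (fun u v huv hv => Kset_hered huv hv) (fun f hf hmem s hs => Kset_sup hO2 hf hmem hs)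
  have hzi₂F : IsFunctional (ziFun (Kset l y)) :=
    isFunctional_ziFun hP (Kset_zero hl y) (fun u v hu hv => Kset_add hP hO2 hO4 hl hu hv)
      (fun u v huv hv => Kset_hered huv hv) (fun f hf hmem s hs => Kset_sup hO2 hf hmem hs)
  set lam₁ : S → ℝ≥0∞ := fun u => μ₁ u + ziFun (Kset l x) u with hlam₁def
  set lam₂ : S → ℝ≥0∞ := fun u => μ₂ u + ziFun (Kset l y) u with hlam₂def
  have hlam₁F : IsFunctional lam₁ := isFunctional_add hμ₁F hzi₁F
  have hlam₂F : IsFunctional lam₂ := isFunctional_add hμ₂F hzi₂F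
  -- the decomposition identity
  have hsumlam : ∀ u : S, l u = lam₁ u + lam₂ u := by
    intro u
    have h1 : μ₁ u + μ₂ u = JSup l l u :=
      JSup_pair hP hO2 hO4 hO7 hl hμt₁mono hμt₂mono hμtsum u
    have h2 : ziFun (Kset l x) u + ziFun (Kset l y) u = ziFun (Jset l) u := by
      by_cases hu : u ∈ Jset l
      · rw [ziFun_of_mem (Jset_sub_Kset x hu), ziFun_of_mem (Jset_sub_Kset y hu),
          ziFun_of_mem hu, add_zero]
      · rw [ziFun_of_not_mem hu]
        by_cases hu1 : u ∈ Kset l x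
        · have hu2 : u ∉ Kset l y := fun hk =>
            hu (Kset_inter_sub_Jset hP hO2 hO4 hO6 hl hα hαtop.ne hu1 hk)
          rw [ziFun_of_mem hu1, ziFun_of_not_mem hu2, zero_add]
        · rw [ziFun_of_not_mem hu1, top_add]
    calc l u = JSup l l u + ziFun (Jset l) u := (JSup_self_add_zi hO2 hl u).symm
    _ = (μ₁ u + μ₂ u) + (ziFun (Kset l x) u + ziFun (Kset l y) u) := by rw [h1, h2]
    _ = lam₁ u + lam₂ u := add_add_add_comm _ _ _ _
  -- the quantitative bound
  have hbound : μ₁ x + μ₂ y ≤ α + ε := by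
    haveI n1 : Nonempty {z : S // z ≤ x ∧ z ∈ Jset l} := ⟨⟨0, hP.1 x, Jset_zero hl⟩⟩
    haveI n2 : Nonempty {z : S // z ≤ y ∧ z ∈ Jset l} := ⟨⟨0, hP.1 y, Jset_zero hl⟩⟩
    show (⨆ z₁ : {z : S // z ≤ x ∧ z ∈ Jset l}, wbSup μt₁ z₁.1)
        + (⨆ z₂ : {z : S // z ≤ y ∧ z ∈ Jset l}, wbSup μt₂ z₂.1) ≤ α + ε
    refine ENNReal.iSup_add_iSup_le fun z₁ z₂ => ?_
    haveI m1 : Nonempty {t : S // WayBelow t z₁.1} := ⟨⟨0, zero_wb hP _⟩⟩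
    haveI m2 : Nonempty {t : S // WayBelow t z₂.1} := ⟨⟨0, zero_wb hP _⟩⟩
    show (⨆ t₁ : {t : S // WayBelow t z₁.1}, μt₁ t₁.1)
        + (⨆ t₂ : {t : S // WayBelow t z₂.1}, μt₂ t₂.1) ≤ α + ε
    refine ENNReal.iSup_add_iSup_le fun t₁ t₂ => ?_
    have ht₁Tx : t₁.1 ∈ Tx := ⟨z₁.1, t₁.2, z₁.2.1, z₁.2.2⟩
    have ht₂Ty : t₂.1 ∈ Ty := ⟨z₂.1, t₂.2, z₂.2.1, z₂.2.2⟩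
    have hev : ∀ᶠ i in (U : Filter {p : S × S // p.1 ∈ Tx ∧ p.2 ∈ Ty}),
        (ν i).1 t₁.1 + (ν i).2 t₂.1 ≤ α + ε := by
      filter_upwards [hUic ⟨(t₁.1, t₂.1), ht₁Tx, ht₂Ty⟩] with i hi
      calc (ν i).1 t₁.1 + (ν i).2 t₂.1 ≤ (ν i).1 i.1.1 + (ν i).2 i.1.2 :=
        add_le_add ((hν₁ i).2.2.1 hi.1) ((hν₂ i).2.2.1 hi.2)
      _ ≤ α + ε := hνle i
    calc μt₁ t₁.1 + μt₂ t₂.1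
        = ulim U (fun i => (ν i).1 t₁.1 + (ν i).2 t₂.1) := (ulim_add U _ _).symm
    _ ≤ α + ε := ulim_le_const hev
  -- conclude
  calc hatInf x y l ≤ lam₁ x + lam₂ y :=
      sInf_le ⟨lam₁, lam₂, hlam₁F, hlam₂F, hsumlam, rfl⟩
  _ = μ₁ x + μ₂ y := by
      rw [hlam₁def, hlam₂def]
      simp only [ziFun_of_mem (self_mem_Kset hl x), ziFun_of_mem (self_mem_Kset hl y), add_zero]
  _ ≤ α + ε := hbound

end CuFormal
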